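/- Let S be a sequence of integers each weighted by a nonnegative integer w(s), and let S' be obtained from S by replacing each element s by a run of w(s) consecutive fresh integers (assigned in increasing order of the value s, so the relative order of runs in value space matches the order of the original values). Then the heaviest increasing subsequence weight of S equals the longest increasing subsequence length of S'. -/

import Mathlib

/-- `hEnd S v` is `h⊣(v)`: the sum of the weights of the elements of the weighted
sequence `S` (value-weight pairs) whose value is at most `v`. -/
def hEnd (S : List (ℕ × ℕ)) (v : ℕ) : ℕ :=
  ((S.filter fun p => decide (p.1 ≤ v)).map Prod.snd).sum

/-- Replace each weighted element `(v, w)` of `S` by the run of `w` consecutive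
integers `h⊣(v) - w + 1, …, h⊣(v)`, in position order. -/
def blow (S : List (ℕ × ℕ)) : List ℕ :=
  S.flatMap fun p => List.range' (hEnd S p.1 - p.2 + 1) p.2


/-- The heaviest increasing subsequence weight of a weighted integer sequence. -/
noncomputable def hisWeight (S : List (ℕ × ℕ)) : ℕ :=
  sSup {x | ∃ T : List (ℕ × ℕ), T.Sublist S ∧ (T.map Prod.fst).Chain' (· < ·) ∧
    x = (T.map Prod.snd).sum}

/-- The longest increasing subsequence length of an integer sequence. -/
noncomputable def lisLength (L : List ℕ) : ℕ :=
  sSup {x | ∃ T : List ℕ, T.Sublist L ∧ T.Chain' (· < ·) ∧ x = T.length}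

/- ----------------- auxiliary lemmas ----------------- -/

theorem sublist_flatMap' {α β : Type} {l l' : List α} (f : α → List β) (h : l.Sublist l') :
    (l.flatMap f).Sublist (l'.flatMap f) := by
  induction h with
  | slnil => simp
  | cons a h ih => simpa using ih.trans (List.sublist_append_right (f a) _)
  | cons_cons a h ih => simpa using ih.append_left (f a)

theorem hEnd_cons (p : ℕ × ℕ) (S : List (ℕ × ℕ)) (v : ℕ) :
    hEnd (p :: S) v = (if p.1 ≤ v then p.2 else 0) + hEnd S v := by
  simp only [hEnd, List.filter_cons]
  split <;> simp_all [hEnd]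

theorem hEnd_mono (S : List (ℕ × ℕ)) {v v' : ℕ} (h : v ≤ v') : hEnd S v ≤ hEnd S v' := by
  induction S with
  | nil => simp [hEnd]
  | cons p S ih =>
    rw [hEnd_cons, hEnd_cons]
    have : (if p.1 ≤ v then p.2 else 0) ≤ (if p.1 ≤ v' then p.2 else 0) := by
      split
      · rw [if_pos (by omega)]
      · exact Nat.zero_le _
    omega

theorem self_le_hEnd {S : List (ℕ × ℕ)} {p : ℕ × ℕ} (hp : p ∈ S) : p.2 ≤ hEnd S p.1 := by
  induction S with
  | nil => cases hp
  | cons q S ih =>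
    rw [hEnd_cons]
    rcases List.mem_cons.mp hp with rfl | hp
    · rw [if_pos le_rfl]; exact Nat.le_add_right _ _
    · exact le_trans (ih hp) (Nat.le_add_left _ _)

theorem hEnd_sep {S : List (ℕ × ℕ)} {q : ℕ × ℕ} (hq : q ∈ S) {v : ℕ} (hv : v < q.1) :
    hEnd S v + q.2 ≤ hEnd S q.1 := by
  induction S with
  | nil => cases hq
  | cons r S ih =>
    rw [hEnd_cons, hEnd_cons]
    rcases List.mem_cons.mp hq with rfl | hq
    · rw [if_neg (by omega), if_pos le_rfl]
      have := hEnd_mono S (le_of_lt hv)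
      omega
    · have h1 := ih hq
      have : (if r.1 ≤ v then r.2 else 0) ≤ (if r.1 ≤ q.1 then r.2 else 0) := by
        split
        · rw [if_pos (by omega)]
        · exact Nat.zero_le _
      omega

/-- Block separation for `blow`. -/
theorem blow_sep {S : List (ℕ × ℕ)} {p q : ℕ × ℕ} (hp : p ∈ S) (hq : q ∈ S)
    (hpq : p.1 < q.1) {a b : ℕ}
    (ha : a ∈ List.range' (hEnd S p.1 - p.2 + 1) p.2)
    (hb : b ∈ List.range' (hEnd S q.1 - q.2 + 1) q.2) : a < b := by
  rw [List.mem_range'_1] at ha hb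
  have h1 := self_le_hEnd hp
  have h2 := self_le_hEnd hq
  have h3 := hEnd_sep hq hpq
  omega

/-- The key combinatorial lemma for the hard direction. -/
theorem key_lemma (S : List (ℕ × ℕ)) (B : ℕ × ℕ → List ℕ)
    (hlen : ∀ p ∈ S, (B p).length ≤ p.2)
    (hsep : ∀ p ∈ S, ∀ q ∈ S, p.1 < q.1 → ∀ a ∈ B p, ∀ b ∈ B q, a < b)
    (hnd : (S.map Prod.fst).Nodup) :
    ∀ T : List ℕ, T.Sublist (S.flatMap B) → T.Pairwise (· < ·) →
    ∃ U : List (ℕ × ℕ), U.Sublist S ∧ (U.map Prod.fst).Pairwise (· < ·) ∧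
      T.length ≤ (U.map Prod.snd).sum ∧ ∀ u ∈ U, ∃ x ∈ B u, x ∈ T := by
  induction S with
  | nil =>
    intro T hT _
    rw [List.flatMap_nil, List.sublist_nil] at hT
    subst hT
    exact ⟨[], by simp⟩
  | cons p S ih =>
    intro T hT hTp
    rw [List.flatMap_cons] at hT
    obtain ⟨t1, t2, rfl, h1, h2⟩ := List.sublist_append_iff.mp hT
    obtain ⟨hTp1, hTp2, hcross⟩ := List.pairwise_append.mp hTp
    have hnd' := List.nodup_cons.mp (show (p.1 :: S.map Prod.fst).Nodup from hnd)
    obtain ⟨U, hU, hUp, hUlen, hUmem⟩ :=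
      ih (fun r hr => hlen r (List.mem_cons_of_mem _ hr))
        (fun r hr s hs => hsep r (List.mem_cons_of_mem _ hr) s (List.mem_cons_of_mem _ hs))
        hnd'.2 t2 h2 hTp2
    by_cases h0 : t1 = []
    · subst h0
      refine ⟨U, hU.trans (List.sublist_cons_self _ _), hUp, by simpa using hUlen,
        fun u hu => ?_⟩
      obtain ⟨x, hxB, hxT⟩ := hUmem u hu
      exact ⟨x, hxB, by simpa using hxT⟩
    · obtain ⟨y, hy⟩ := List.exists_mem_of_ne_nil t1 h0
      have hyB : y ∈ B p := h1.subset hy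
      have hlt : ∀ u ∈ U, p.1 < u.1 := by
        intro u hu
        obtain ⟨x, hxB, hxT⟩ := hUmem u hu
        have hyx : y < x := hcross y hy x hxT
        have huS : u ∈ S := hU.subset hu
        have hne : p.1 ≠ u.1 := by
          intro h
          exact hnd'.1 (h ▸ List.mem_map_of_mem (f := Prod.fst) huS)
        rcases lt_or_gt_of_ne hne with h | h
        · exact h
        · exact absurd (hsep u (List.mem_cons_of_mem _ huS) p (List.mem_cons_self)
            h x hxB y hyB) (by omega)
      refine ⟨p :: U, hU.cons₂ p, ?_, ?_, ?_⟩
      · rw [List.map_cons, List.pairwise_cons]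
        exact ⟨fun a ha => by obtain ⟨u, hu, rfl⟩ := List.mem_map.mp ha; exact hlt u hu, hUp⟩
      · have := hlen p (List.mem_cons_self)
        have := h1.length_le
        simp only [List.length_append, List.map_cons, List.sum_cons]
        omega
      · intro u hu
        rcases List.mem_cons.mp hu with rfl | hu
        · exact ⟨y, hyB, List.mem_append_left _ hy⟩
        · obtain ⟨x, hxB, hxT⟩ := hUmem u hu
          exact ⟨x, hxB, List.mem_append_right _ hxT⟩

theorem his_eq_lis_of_blowup (S : List (ℕ × ℕ)) (hnd : (S.map Prod.fst).Nodup) :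
    hisWeight S = lisLength (blow S) := by
  set hisSet := {x | ∃ T : List (ℕ × ℕ), T.Sublist S ∧ (T.map Prod.fst).Chain' (· < ·) ∧
    x = (T.map Prod.snd).sum} with hhis
  set lisSet := {x | ∃ T : List ℕ, T.Sublist (blow S) ∧ T.Chain' (· < ·) ∧ x = T.length}
    with hlis
  have hisNe : hisSet.Nonempty := ⟨0, [], List.nil_sublist _, List.isChain_nil, by simp⟩
  have lisNe : lisSet.Nonempty := ⟨0, [], List.nil_sublist _, List.isChain_nil, by simp⟩
  have hisBdd : BddAbove hisSet := by
    refine ⟨(S.map Prod.snd).sum, ?_⟩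
    rintro x ⟨T, hT, _, rfl⟩
    exact (hT.map Prod.snd).sum_le_sum (fun a _ => Nat.zero_le a)
  have lisBdd : BddAbove lisSet := by
    refine ⟨(blow S).length, ?_⟩
    rintro x ⟨T, hT, _, rfl⟩
    exact hT.length_le
  rw [hisWeight, lisLength, ← hhis, ← hlis]
  apply le_antisymm
  · apply csSup_le hisNe
    rintro x ⟨T, hT, hc, rfl⟩
    set B : ℕ × ℕ → List ℕ := fun p => List.range' (hEnd S p.1 - p.2 + 1) p.2 with hB
    have hmem : (T.flatMap B).length ∈ lisSet := by
      refine ⟨T.flatMap B, sublist_flatMap' B hT, ?_, rfl⟩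
      refine List.isChain_iff_pairwise.mpr ?_
      rw [List.pairwise_flatMap]
      constructor
      · intro a _; exact List.pairwise_lt_range' (pos := Nat.one_pos)
      · have hp : T.Pairwise (fun a b => a.1 < b.1) :=
          List.pairwise_map.mp (List.isChain_iff_pairwise.mp hc)
        refine hp.imp_of_mem ?_
        intro a b ha hb hab x hx y hy
        exact blow_sep (hT.subset ha) (hT.subset hb) hab hx hy
      -- done
    have hlen : (T.flatMap B).length = (T.map Prod.snd).sum := by
      rw [List.length_flatMap]
      congr 1
      apply List.map_congr_left
      intro p _
      simp [hB, Function.comp]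
    rw [← hlen]
    exact le_csSup lisBdd hmem
  · apply csSup_le lisNe
    rintro x ⟨T, hT, hc, rfl⟩
    obtain ⟨U, hU, hUp, hUlen, _⟩ :=
      key_lemma S (fun p => List.range' (hEnd S p.1 - p.2 + 1) p.2)
        (fun p _ => by simp)
        (fun p hp q hq hpq a ha b hb => blow_sep hp hq hpq ha hb)
        hnd T hT (List.isChain_iff_pairwise.mp hc)
    have hmem : (U.map Prod.snd).sum ∈ hisSet :=
      ⟨U, hU, List.isChain_iff_pairwise.mpr hUp, rfl⟩
    exact le_trans hUlen (le_csSup hisBdd hmem)
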